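/- Let {|φ_l⟩} and {|δ_l⟩} be two orthonormal bases of a finite-dimensional Hilbert space H, and let Ṽ be a linear operator on H ⊗ ℂ^D such that (Ṽ ⊗ 𝟙_D)(|φ_l⟩ ⊗ |φ⁺_D⟩) = |δ_l⟩ ⊗ |φ⁺_D⟩ for every l (where the middle ℂ^D factor of Ṽ is paired with the first half of |φ⁺_D⟩). Then Ṽ = (Σ_l |δ_l⟩⟨φ_l|) ⊗ 𝟙_D. -/

import Mathlib

open Matrix Kronecker BigOperators

noncomputable def maxEnt (D : ℕ) : Fin D × Fin D → ℂ :=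
  fun p => if p.1 = p.2 then (1 / (Real.sqrt D : ℂ)) else 0

/-- If `Ṽ` on `H ⊗ ℂ^D` satisfies `(Ṽ ⊗ 𝟙_D)(|φ_l⟩ ⊗ |φ⁺_D⟩) = |δ_l⟩ ⊗ |φ⁺_D⟩` for every
member `l` of two orthonormal bases `{|φ_l⟩}, {|δ_l⟩}` of `H`, then
`Ṽ = (Σ_l |δ_l⟩⟨φ_l|) ⊗ 𝟙_D`. Here `H = ℂ^ι` and bases are indexed by `κ`. -/
theorem tilde_V_is_product {ι κ : Type*} [Fintype ι] [DecidableEq ι] [Fintype κ] [DecidableEq κ]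
    (D : ℕ)
    (φ δ : κ → ι → ℂ)
    (hφon : ∀ l m, star (φ l) ⬝ᵥ φ m = if l = m then (1 : ℂ) else 0)
    (hφspan : Submodule.span ℂ (Set.range φ) = ⊤)
    (hδon : ∀ l m, star (δ l) ⬝ᵥ δ m = if l = m then (1 : ℂ) else 0)
    (hδspan : Submodule.span ℂ (Set.range δ) = ⊤)
    (V : Matrix (ι × Fin D) (ι × Fin D) ℂ)
    (hV : ∀ l, (V ⊗ₖ (1 : Matrix (Fin D) (Fin D) ℂ)).mulVec
        (fun p => φ l p.1.1 * maxEnt D (p.1.2, p.2)) =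
        fun p => δ l p.1.1 * maxEnt D (p.1.2, p.2)) :
    V = (fun i j => ∑ l, δ l i * star (φ l j) : Matrix ι ι ℂ) ⊗ₖ
        (1 : Matrix (Fin D) (Fin D) ℂ) := by
  ext ⟨i, a⟩ ⟨j, b⟩
  have hD : 0 < D := a.pos
  have hs : ((Real.sqrt D : ℂ))⁻¹ ≠ 0 := by
    simp only [ne_eq, inv_eq_zero, Complex.ofReal_eq_zero]
    exact Real.sqrt_ne_zero'.mpr (by exact_mod_cast hD)
  -- key scalar equation
  have key : ∀ l (a b : Fin D) (i : ι),
      ∑ x : ι, V (i, a) (x, b) * φ l x = if a = b then δ l i else 0 := by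
    intro l a b i
    have h := congrFun (hV l) ((i, a), b)
    simp [Matrix.mulVec, dotProduct, Fintype.sum_prod_type, maxEnt, Matrix.one_apply,
      mul_ite, ite_mul, mul_zero, zero_mul, Finset.mul_sum] at h
    have h' : (∑ x : ι, V (i, a) (x, b) * φ l x) * ((Real.sqrt D : ℂ))⁻¹
        = (if a = b then δ l i else 0) * ((Real.sqrt D : ℂ))⁻¹ := by
      rw [Finset.sum_mul]
      simpa [mul_assoc, ite_mul] using h
    exact mul_right_cancel₀ hs h'
  set A : Matrix ι ι ℂ := fun i' j' => V (i', a) (j', b) with hA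
  set B : Matrix ι ι ℂ := fun i' j' =>
      (∑ l, δ l i' * star (φ l j')) * (if a = b then 1 else 0) with hB
  have hBside : ∀ (l : κ) i', (∑ x, B i' x * φ l x) = (if a = b then δ l i' else 0) := by
    intro l i'
    have expand : ∀ x, B i' x * φ l x
        = ∑ l', (δ l' i' * (if a = b then 1 else 0)) * (star (φ l' x) * φ l x) := by
      intro x
      simp only [hB, Finset.sum_mul]
      exact Finset.sum_congr rfl fun l' _ => by ring
    calc ∑ x, B i' x * φ l x
        = ∑ x, ∑ l', (δ l' i' * (if a = b then 1 else 0)) * (star (φ l' x) * φ l x) :=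
          Finset.sum_congr rfl fun x _ => expand x
      _ = ∑ l', (δ l' i' * (if a = b then 1 else 0)) * ∑ x, star (φ l' x) * φ l x := by
          rw [Finset.sum_comm]
          exact Finset.sum_congr rfl fun l' _ => (Finset.mul_sum _ _ _).symm
      _ = ∑ l', (δ l' i' * (if a = b then 1 else 0)) * (if l' = l then 1 else 0) := by
          refine Finset.sum_congr rfl fun l' _ => ?_
          rw [show (∑ x, star (φ l' x) * φ l x) = star (φ l') ⬝ᵥ φ l from rfl, hφon]
      _ = if a = b then δ l i' else 0 := by
          simp [mul_ite, mul_one, mul_zero, Finset.sum_ite_eq']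
  have hAB : A = B := by
    apply Matrix.toLin'.injective
    apply LinearMap.ext_on hφspan
    rintro x ⟨l, rfl⟩
    ext i'
    simp only [Matrix.toLin'_apply, Matrix.mulVec, dotProduct]
    rw [hBside l i']
    exact key l a b i'
  have hij := congrFun (congrFun hAB i) j
  simp only [hA, hB] at hij
  rw [hij]
  show _ = (∑ l, δ l i * star (φ l j)) * (1 : Matrix (Fin D) (Fin D) ℂ) a b
  simp [Matrix.one_apply, mul_ite, mul_one, mul_zero]
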